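/- Let H be a graph with fractional edge-cover number ρ(H) and let G be a graph with m edges. Then the number of subgraphs of G isomorphic to H is at most (2m)^{ρ(H)}. -/

import Mathlib

open Finset Real

section AGM
variable {V W : Type*} [Fintype V] [DecidableEq V] [Fintype W] [DecidableEq W]


lemma holder_core {α E : Type*} [Fintype α] (t : Finset E) (ψ : E → ℝ) (h : E → α → ℝ)
    (hψ : ∀ e ∈ t, 0 ≤ ψ e) (hne : ∀ e ∈ t, ψ e ≠ 0) (hh : ∀ e ∈ t, ∀ x, 0 ≤ h e x)
    (hs : 1 ≤ ∑ e ∈ t, ψ e) :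
    ∑ x : α, ∏ e ∈ t, h e x ^ ψ e ≤ ∏ e ∈ t, (∑ x : α, h e x) ^ ψ e := by
  set S := ∑ e ∈ t, ψ e with hSdef
  have hS0 : 0 < S := lt_of_lt_of_le one_pos hs
  by_cases hzero : ∃ e ∈ t, ∑ x : α, h e x = 0
  · obtain ⟨e, het, hTe⟩ := hzero
    have hzz : ∀ x, h e x = 0 := by
      intro x
      have := Finset.sum_eq_zero_iff_of_nonneg (fun x _ => hh e het x) |>.mp hTe
      exact this x (mem_univ x)
    have : ∑ x : α, ∏ e ∈ t, h e x ^ ψ e = 0 := by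
      apply Finset.sum_eq_zero
      intro x _
      apply Finset.prod_eq_zero het
      rw [hzz x, Real.zero_rpow (hne e het)]
    rw [this]
    exact Finset.prod_nonneg fun e he => Real.rpow_nonneg
      (Finset.sum_nonneg fun x _ => hh e he x) _
  · push_neg at hzero
    have hT : ∀ e ∈ t, 0 < ∑ x : α, h e x := fun e he =>
      lt_of_le_of_ne (Finset.sum_nonneg fun x _ => hh e he x) (Ne.symm (hzero e he))
    set T : E → ℝ := fun e => ∑ x : α, h e x with hTdef
    have key : ∑ x : α, ∏ e ∈ t, (h e x / T e) ^ ψ e ≤ 1 := by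
      have step1 : ∀ x : α, ∏ e ∈ t, (h e x / T e) ^ ψ e
          ≤ ∏ e ∈ t, (h e x / T e) ^ (ψ e / S) := by
        intro x
        apply Finset.prod_le_prod
        · intro e he; exact Real.rpow_nonneg (div_nonneg (hh e he x) (hT e he).le) _
        · intro e he
          rcases eq_or_lt_of_le (div_nonneg (hh e he x) (hT e he).le) with h0 | hpos
          · rw [← h0, Real.zero_rpow (hne e he),
              Real.zero_rpow (div_ne_zero (hne e he) hS0.ne')]
          · apply Real.rpow_le_rpow_of_exponent_ge hpos
            · rw [div_le_one (hT e he)]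
              exact Finset.single_le_sum (fun x _ => hh e he x) (mem_univ x)
            · rw [div_le_iff₀ hS0]
              nlinarith [hψ e he, hs]
      have step2 : ∀ x : α, ∏ e ∈ t, (h e x / T e) ^ (ψ e / S)
          ≤ ∑ e ∈ t, (ψ e / S) * (h e x / T e) := by
        intro x
        apply Real.geom_mean_le_arith_mean_weighted
        · intro e he; exact div_nonneg (hψ e he) hS0.le
        · rw [← Finset.sum_div, div_self hS0.ne']
        · intro e he; exact div_nonneg (hh e he x) (hT e he).le
      calc ∑ x : α, ∏ e ∈ t, (h e x / T e) ^ ψ e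
          ≤ ∑ x : α, ∑ e ∈ t, (ψ e / S) * (h e x / T e) :=
            Finset.sum_le_sum fun x _ => (step1 x).trans (step2 x)
        _ = ∑ e ∈ t, (ψ e / S) * (∑ x : α, h e x / T e) := by
            rw [Finset.sum_comm]
            exact Finset.sum_congr rfl fun e _ => (Finset.mul_sum _ _ _).symm
        _ = ∑ e ∈ t, (ψ e / S) := by
            apply Finset.sum_congr rfl
            intro e he
            rw [← Finset.sum_div, div_self (hT e he).ne', mul_one]
        _ = 1 := by rw [← Finset.sum_div, div_self hS0.ne']
    have expand : ∀ x : α, ∏ e ∈ t, h e x ^ ψ e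
        = (∏ e ∈ t, T e ^ ψ e) * ∏ e ∈ t, (h e x / T e) ^ ψ e := by
      intro x
      rw [← Finset.prod_mul_distrib]
      apply Finset.prod_congr rfl
      intro e he
      rw [← Real.mul_rpow (hT e he).le (div_nonneg (hh e he x) (hT e he).le),
        mul_div_cancel₀ _ (hT e he).ne']
    calc ∑ x : α, ∏ e ∈ t, h e x ^ ψ e
        = (∏ e ∈ t, T e ^ ψ e) * ∑ x : α, ∏ e ∈ t, (h e x / T e) ^ ψ e := by
          rw [Finset.mul_sum]; exact Finset.sum_congr rfl fun x _ => expand x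
      _ ≤ (∏ e ∈ t, T e ^ ψ e) * 1 := by
          apply mul_le_mul_of_nonneg_left key
          exact Finset.prod_nonneg fun e he => Real.rpow_nonneg (hT e he).le _
      _ = ∏ e ∈ t, T e ^ ψ e := mul_one _

lemma holder_sum {α E : Type*} [Fintype α] (t : Finset E) (ψ : E → ℝ) (h : E → α → ℝ)
    (hψ : ∀ e ∈ t, 0 ≤ ψ e) (hh : ∀ e ∈ t, ∀ x, 0 ≤ h e x)
    (hs : 1 ≤ ∑ e ∈ t, ψ e) :
    ∑ x : α, ∏ e ∈ t, h e x ^ ψ e ≤ ∏ e ∈ t, (∑ x : α, h e x) ^ ψ e := by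
  classical
  set t' := t.filter (fun e => ψ e ≠ 0) with ht'
  have hsub : t' ⊆ t := Finset.filter_subset _ _
  have hprod : ∀ (z : E → ℝ), ∏ e ∈ t, z e ^ ψ e = ∏ e ∈ t', z e ^ ψ e := by
    intro z
    rw [Finset.prod_subset hsub]
    intro e het he'
    have : ψ e = 0 := by
      by_contra hc
      exact he' (Finset.mem_filter.mpr ⟨het, hc⟩)
    rw [this, Real.rpow_zero]
  have hsum : ∑ e ∈ t', ψ e = ∑ e ∈ t, ψ e := by
    rw [Finset.sum_subset hsub]
    intro e het he'
    by_contra hc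
    exact he' (Finset.mem_filter.mpr ⟨het, hc⟩)
  calc ∑ x : α, ∏ e ∈ t, h e x ^ ψ e
      = ∑ x : α, ∏ e ∈ t', h e x ^ ψ e :=
        Finset.sum_congr rfl fun x _ => hprod _
    _ ≤ ∏ e ∈ t', (∑ x : α, h e x) ^ ψ e :=
        holder_core t' ψ h (fun e he => hψ e (hsub he))
          (fun e he => (Finset.mem_filter.mp he).2)
          (fun e he => hh e (hsub he)) (hsum ▸ hs)
    _ = ∏ e ∈ t, (∑ x : α, h e x) ^ ψ e := (hprod _).symm

/-- Reindex a sum over functions fixed (equal to `d`) outside `insert v t` as a double sum. -/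
lemma reindex (d : V → W) (t : Finset V) (v : V) (hv : v ∉ t) (F : (V → W) → ℝ) :
    ∑ f ∈ Finset.univ.filter (fun f : V → W => ∀ u ∉ insert v t, f u = d u), F f
      = ∑ x : W, ∑ f ∈ Finset.univ.filter (fun f : V → W => ∀ u ∉ t, f u = d u),
          F (Function.update f v x) := by
  classical
  rw [← Finset.sum_product']
  have key : ∀ f : V → W, Function.update (Function.update f v (d v)) v (f v) = f := by
    intro f
    rw [Function.update_idem, Function.update_eq_self]
  refine Finset.sum_nbij' (fun f => (f v, Function.update f v (d v)))
    (fun p => Function.update p.2 v p.1) ?_ ?_ ?_ ?_ ?_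
  · intro f hf
    simp only [Finset.mem_filter, Finset.mem_univ, true_and, Finset.mem_product] at hf ⊢
    intro u hu
    rcases eq_or_ne u v with rfl | hne
    · exact Function.update_self _ _ _
    · rw [Function.update_of_ne hne]
      exact hf u (by simp [hne, hu])
  · intro p hp
    simp only [Finset.mem_product, Finset.mem_filter, Finset.mem_univ, true_and] at hp ⊢
    intro u hu
    rcases eq_or_ne u v with rfl | hne
    · exact absurd (Finset.mem_insert_self u t) hu
    · rw [Function.update_of_ne hne]
      exact hp u (fun h => hu (Finset.mem_insert_of_mem h))
  · intro f _
    exact key f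
  · intro p hp
    simp only [Finset.mem_product, Finset.mem_filter, Finset.mem_univ, true_and] at hp
    have h1 : Function.update p.2 v p.1 v = p.1 := Function.update_self _ _ _
    have h2 : Function.update (Function.update p.2 v p.1) v (d v) = p.2 := by
      rw [Function.update_idem]
      have : p.2 v = d v := hp v hv
      rw [← this, Function.update_eq_self]
    exact Prod.ext h1 h2
  · intro f _
    rw [key f]

/-- Finner's inequality / combinatorial Brascamp–Lieb over finite types. -/
lemma finner {E : Type*} [Fintype E] (d : V → W) (A : E → Finset V) (ψ : E → ℝ)
    (hψ : ∀ e, 0 ≤ ψ e) (s : Finset V) :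
    ∀ (g : E → (V → W) → ℝ), (∀ e f, 0 ≤ g e f) →
    (∀ e f f', (∀ u ∈ A e, f u = f' u) → g e f = g e f') →
    (∀ v ∈ s, 1 ≤ ∑ e ∈ Finset.univ.filter (fun e => v ∈ A e), ψ e) →
    ∑ f ∈ Finset.univ.filter (fun f : V → W => ∀ u ∉ s, f u = d u), ∏ e : E, g e f ^ ψ e
      ≤ ∏ e : E, (∑ f ∈ Finset.univ.filter
          (fun f : V → W => ∀ u ∉ A e ∩ s, f u = d u), g e f) ^ ψ e := by
  classical
  induction s using Finset.induction with
  | empty =>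
    intro g hg hdep hcov
    have hsingle : ∀ (B : Finset V), Finset.univ.filter
        (fun f : V → W => ∀ u ∉ (∅ : Finset V), f u = d u) = {d} := by
      intro B
      ext f
      simp only [Finset.mem_filter, Finset.mem_univ, true_and, Finset.mem_singleton,
        Finset.notMem_empty, not_false_iff, forall_true_left]
      constructor
      · intro h; funext u; exact h u
      · intro h u; rw [h]
    rw [hsingle ∅, Finset.sum_singleton]
    apply Finset.prod_le_prod
    · intro e _; exact Real.rpow_nonneg (hg e d) _
    · intro e _
      have : (A e ∩ ∅ : Finset V) = ∅ := Finset.inter_empty _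
      rw [this, hsingle ∅, Finset.sum_singleton]
  | @insert v t hv ih =>
    intro g hg hdep hcov
    -- Step 1: reindex
    rw [reindex d t v hv]
    -- inner functions
    set N : E → (V → W) → ℝ := fun e f => ∑ x : W, g e (Function.update f v x) with hN
    set Gg : E → (V → W) → ℝ := fun e => if v ∈ A e then N e else g e with hGg
    have hGnonneg : ∀ e f, 0 ≤ Gg e f := by
      intro e f
      simp only [hGg]
      split
      · exact Finset.sum_nonneg fun x _ => hg e _
      · exact hg e f
    have hGdep : ∀ e f f', (∀ u ∈ A e, f u = f' u) → Gg e f = Gg e f' := by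
      intro e f f' hagree
      simp only [hGg]
      split
      · apply Finset.sum_congr rfl
        intro x _
        apply hdep
        intro u hu
        rcases eq_or_ne u v with rfl | hne
        · simp [Function.update_self]
        · rw [Function.update_of_ne hne, Function.update_of_ne hne]; exact hagree u hu
      · exact hdep e f f' hagree
    have hGcov : ∀ u ∈ t, 1 ≤ ∑ e ∈ Finset.univ.filter (fun e => u ∈ A e), ψ e :=
      fun u hu => hcov u (Finset.mem_insert_of_mem hu)
    -- Step 2: pointwise bound for each f' fixed outside t
    have step2 : ∀ f' ∈ Finset.univ.filter (fun f : V → W => ∀ u ∉ t, f u = d u),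
        ∑ x : W, ∏ e : E, g e (Function.update f' v x) ^ ψ e
          ≤ ∏ e : E, Gg e f' ^ ψ e := by
      intro f' _
      have hsplit : ∀ (z : E → ℝ), ∏ e : E, z e
          = (∏ e ∈ Finset.univ.filter (fun e => v ∈ A e), z e) *
            ∏ e ∈ Finset.univ.filter (fun e => v ∉ A e), z e := by
        intro z
        rw [Finset.prod_filter_mul_prod_filter_not]
      calc ∑ x : W, ∏ e : E, g e (Function.update f' v x) ^ ψ e
          = ∑ x : W, ((∏ e ∈ Finset.univ.filter (fun e => v ∈ A e),
              g e (Function.update f' v x) ^ ψ e) *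
              ∏ e ∈ Finset.univ.filter (fun e => v ∉ A e), g e f' ^ ψ e) := by
            apply Finset.sum_congr rfl
            intro x _
            rw [hsplit]
            congr 1
            apply Finset.prod_congr rfl
            intro e he
            simp only [Finset.mem_filter] at he
            congr 1
            apply hdep
            intro u hu
            have hne : u ≠ v := fun h => he.2 (h ▸ hu)
            exact Function.update_of_ne hne _ _
        _ = (∑ x : W, ∏ e ∈ Finset.univ.filter (fun e => v ∈ A e),
              g e (Function.update f' v x) ^ ψ e) *
              ∏ e ∈ Finset.univ.filter (fun e => v ∉ A e), g e f' ^ ψ e := by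
            rw [← Finset.sum_mul]
        _ ≤ (∏ e ∈ Finset.univ.filter (fun e => v ∈ A e), N e f' ^ ψ e) *
              ∏ e ∈ Finset.univ.filter (fun e => v ∉ A e), g e f' ^ ψ e := by
            apply mul_le_mul_of_nonneg_right
            · exact holder_sum _ ψ (fun e x => g e (Function.update f' v x))
                (fun e _ => hψ e) (fun e _ x => hg e _)
                (hcov v (Finset.mem_insert_self v t))
            · exact Finset.prod_nonneg fun e _ => Real.rpow_nonneg (hg e f') _
        _ = ∏ e : E, Gg e f' ^ ψ e := by
            rw [hsplit (fun e => Gg e f' ^ ψ e)]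
            congr 1
            · apply Finset.prod_congr rfl
              intro e he
              simp only [Finset.mem_filter] at he
              simp only [hGg, if_pos he.2]
            · apply Finset.prod_congr rfl
              intro e he
              simp only [Finset.mem_filter] at he
              simp only [hGg, if_neg he.2]
    -- combine with IH
    rw [Finset.sum_comm]
    calc ∑ f' ∈ Finset.univ.filter (fun f : V → W => ∀ u ∉ t, f u = d u),
          ∑ x : W, ∏ e : E, g e (Function.update f' v x) ^ ψ e
        ≤ ∑ f' ∈ Finset.univ.filter (fun f : V → W => ∀ u ∉ t, f u = d u),
            ∏ e : E, Gg e f' ^ ψ e := Finset.sum_le_sum step2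
      _ ≤ ∏ e : E, (∑ f ∈ Finset.univ.filter
            (fun f : V → W => ∀ u ∉ A e ∩ t, f u = d u), Gg e f) ^ ψ e :=
          ih Gg hGnonneg hGdep hGcov
      _ ≤ ∏ e : E, (∑ f ∈ Finset.univ.filter
            (fun f : V → W => ∀ u ∉ A e ∩ insert v t, f u = d u), g e f) ^ ψ e := by
          apply Finset.prod_le_prod
          · intro e _
            exact Real.rpow_nonneg (Finset.sum_nonneg fun f _ => hGnonneg e f) _
          · intro e _
            apply Real.rpow_le_rpow (Finset.sum_nonneg fun f _ => hGnonneg e f) _ (hψ e)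
            by_cases hve : v ∈ A e
            · -- A e ∩ insert v t = insert v (A e ∩ t)
              have hins : A e ∩ insert v t = insert v (A e ∩ t) := by
                ext u
                simp only [Finset.mem_inter, Finset.mem_insert]
                constructor
                · rintro ⟨h1, rfl | h3⟩
                  · exact Or.inl rfl
                  · exact Or.inr ⟨h1, h3⟩
                · rintro (rfl | ⟨h1, h2⟩)
                  · exact ⟨hve, Or.inl rfl⟩
                  · exact ⟨h1, Or.inr h2⟩
              have hvnott : v ∉ A e ∩ t := fun h => hv (Finset.mem_inter.mp h).2
              rw [hins, reindex d (A e ∩ t) v hvnott (g e)]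
              rw [Finset.sum_comm]
              apply le_of_eq
              apply Finset.sum_congr rfl
              intro f hf
              simp only [hGg, if_pos hve, hN]
            · have heq : A e ∩ insert v t = A e ∩ t := by
                ext u; simp only [Finset.mem_inter, Finset.mem_insert]
                constructor
                · rintro ⟨h1, h2 | h3⟩
                  · exact absurd (h2 ▸ h1) hve
                  · exact ⟨h1, h3⟩
                · rintro ⟨h1, h2⟩; exact ⟨h1, Or.inr h2⟩
              rw [heq]
              apply le_of_eq
              apply Finset.sum_congr rfl
              intro f hf
              simp only [hGg, if_neg hve]



lemma hom_count_le [Nonempty W]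
    (H : SimpleGraph V) (G : SimpleGraph W) (ψ : Sym2 V → ℝ)
    (hψ0 : ∀ e, 0 ≤ ψ e) (hψe : ∀ e, e ∉ H.edgeSet → ψ e = 0)
    (hcov : ∀ v : V, 1 ≤ ∑ e : Sym2 V, if v ∈ e then ψ e else 0)
    (m : ℕ) (hm : m = G.edgeSet.ncard) :
    (Set.ncard {f : V → W | ∀ e ∈ H.edgeSet, Sym2.map f e ∈ G.edgeSet} : ℝ)
      ≤ (2 * m : ℝ) ^ (∑ e : Sym2 V, ψ e) := by
  classical
  set d : V → W := fun _ => Classical.arbitrary W with hd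
  set A : Sym2 V → Finset V := fun e => Finset.univ.filter (fun u => u ∈ e) with hA
  set g : Sym2 V → (V → W) → ℝ :=
    fun e f => if Sym2.map f e ∈ G.edgeSet then 1 else 0 with hg
  have hgnn : ∀ e f, 0 ≤ g e f := by
    intro e f; simp only [hg]; split <;> norm_num
  have hgdep : ∀ e f f', (∀ u ∈ A e, f u = f' u) → g e f = g e f' := by
    intro e f f' hagree
    have : Sym2.map f e = Sym2.map f' e := by
      induction e using Sym2.ind with
      | _ a b =>
        have ha : f a = f' a := hagree a (by simp [hA])
        have hb : f b = f' b := hagree b (by simp [hA])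
        simp [Sym2.map_pair_eq, ha, hb]
    simp only [hg, this]
  have hcov' : ∀ v ∈ (Finset.univ : Finset V),
      1 ≤ ∑ e ∈ Finset.univ.filter (fun e : Sym2 V => v ∈ A e), ψ e := by
    intro v _
    calc (1:ℝ) ≤ ∑ e : Sym2 V, if v ∈ e then ψ e else 0 := hcov v
      _ = ∑ e ∈ Finset.univ.filter (fun e : Sym2 V => v ∈ A e), ψ e := by
          rw [Finset.sum_filter]
          apply Finset.sum_congr rfl
          intro e _
          simp [hA]
  have main := finner d A ψ hψ0 Finset.univ g hgnn hgdep hcov'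
  -- LHS of main is a sum over all functions
  have huniv : Finset.univ.filter (fun f : V → W => ∀ u ∉ (Finset.univ : Finset V),
      f u = d u) = Finset.univ := by
    apply Finset.filter_true_of_mem
    intro f _ u hu
    exact absurd (Finset.mem_univ u) hu
  rw [huniv] at main
  -- the number of homs is at most the LHS of main
  have hncard : (Set.ncard {f : V → W | ∀ e ∈ H.edgeSet, Sym2.map f e ∈ G.edgeSet} : ℝ)
      ≤ ∑ f : V → W, ∏ e : Sym2 V, g e f ^ ψ e := by
    have h1 : {f : V → W | ∀ e ∈ H.edgeSet, Sym2.map f e ∈ G.edgeSet}.ncard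
        = (Finset.univ.filter
            (fun f : V → W => ∀ e ∈ H.edgeSet, Sym2.map f e ∈ G.edgeSet)).card := by
      rw [Set.ncard_eq_toFinset_card']
      congr 1
      ext f
      simp
    rw [h1]
    set T := Finset.univ.filter
      (fun f : V → W => ∀ e ∈ H.edgeSet, Sym2.map f e ∈ G.edgeSet) with hT
    have h2 : ∀ f ∈ T, ∏ e : Sym2 V, g e f ^ ψ e = 1 := by
      intro f hf
      simp only [hT, Finset.mem_filter] at hf
      apply Finset.prod_eq_one
      intro e _
      by_cases hz : ψ e = 0
      · rw [hz, Real.rpow_zero]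
      · have he : e ∈ H.edgeSet := by
          by_contra hc
          exact hz (hψe e hc)
        have : g e f = 1 := by simp only [hg, if_pos (hf.2 e he)]
        rw [this, Real.one_rpow]
    calc (T.card : ℝ) = ∑ f ∈ T, ∏ e : Sym2 V, g e f ^ ψ e := by
          rw [Finset.sum_congr rfl h2, Finset.sum_const, nsmul_eq_mul, mul_one]
      _ ≤ ∑ f : V → W, ∏ e : Sym2 V, g e f ^ ψ e := by
          apply Finset.sum_le_sum_of_subset_of_nonneg (Finset.subset_univ T)
          intro f _ _
          exact Finset.prod_nonneg fun e _ => Real.rpow_nonneg (hgnn e f) _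
  refine hncard.trans (main.trans ?_)
  -- bound each factor by (2m)^(ψ e)
  have hfac : ∀ e : Sym2 V,
      (∑ f ∈ Finset.univ.filter
        (fun f : V → W => ∀ u ∉ A e ∩ Finset.univ, f u = d u), g e f) ^ ψ e
      ≤ (2 * m : ℝ) ^ ψ e := by
    intro e
    by_cases hz : ψ e = 0
    · rw [hz, Real.rpow_zero, Real.rpow_zero]
    · have he : e ∈ H.edgeSet := by
        by_contra hc
        exact hz (hψe e hc)
      apply Real.rpow_le_rpow
      · exact Finset.sum_nonneg fun f _ => hgnn e f
      · -- the sum is the number of partial maps hitting an edge, at most 2m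
        set Se := Finset.univ.filter
          (fun f : V → W => ∀ u ∉ A e ∩ Finset.univ, f u = d u) with hSe
        have hsum : ∑ f ∈ Se, g e f
            = ((Se.filter (fun f => Sym2.map f e ∈ G.edgeSet)).card : ℝ) := by
          simp only [hg]
          rw [Finset.sum_boole]
        rw [hsum]
        -- now bound the cardinality by the number of darts
        induction e using Sym2.ind with
        | _ a b =>
        have hab : a ≠ b := by
          intro hcon
          have := H.not_isDiag_of_mem_edgeSet he
          rw [hcon] at this
          exact this (Sym2.mk_isDiag_iff.mpr rfl)
        have hcard : (Se.filter (fun f => Sym2.map f s(a,b) ∈ G.edgeSet)).card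
            ≤ Fintype.card G.Dart := by
          rw [← Fintype.card_coe]
          apply Fintype.card_le_of_injective
            (fun f => (⟨(f.1 a, f.1 b), by
              have := (Finset.mem_filter.mp f.2).2
              rwa [Sym2.map_pair_eq, SimpleGraph.mem_edgeSet] at this⟩ : G.Dart))
          intro f1 f2 hf
          have h12 := congrArg SimpleGraph.Dart.toProd hf
          simp only [Prod.ext_iff] at h12
          apply Subtype.ext
          funext u
          by_cases hu : u ∈ A s(a,b)
          · simp only [hA, Finset.mem_filter, Sym2.mem_iff] at hu
            rcases hu.2 with rfl | rfl
            · exact h12.1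
            · exact h12.2
          · have e1 := (Finset.mem_filter.mp (Finset.mem_filter.mp f1.2).1).2
            have e2 := (Finset.mem_filter.mp (Finset.mem_filter.mp f2.2).1).2
            rw [e1 u (by simpa using hu), e2 u (by simpa using hu)]
        have hdarts : Fintype.card G.Dart = 2 * m := by
          rw [SimpleGraph.dart_card_eq_twice_card_edges]
          congr 1
          rw [hm, Set.ncard_eq_toFinset_card']
          unfold SimpleGraph.edgeFinset
          convert rfl
        calc ((Se.filter (fun f => Sym2.map f s(a,b) ∈ G.edgeSet)).card : ℝ)
            ≤ (Fintype.card G.Dart : ℝ) := by exact_mod_cast hcard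
          _ = 2 * m := by rw [hdarts]; push_cast; ring
      · exact hψ0 e
  calc ∏ e : Sym2 V, (∑ f ∈ Finset.univ.filter
        (fun f : V → W => ∀ u ∉ A e ∩ Finset.univ, f u = d u), g e f) ^ ψ e
      ≤ ∏ e : Sym2 V, (2 * m : ℝ) ^ ψ e := by
        apply Finset.prod_le_prod
        · intro e _
          exact Real.rpow_nonneg (Finset.sum_nonneg fun f _ => hgnn e f) _
        · intro e _; exact hfac e
    _ = (2 * m : ℝ) ^ (∑ e : Sym2 V, ψ e) := by
        rw [Real.rpow_sum_of_nonneg (by positivity) (fun e _ => hψ0 e)]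


lemma subgraph_count_le [Nonempty W] (H : SimpleGraph V) (G : SimpleGraph W) :
    {G' : G.Subgraph | Nonempty (G'.coe ≃g H)}.ncard
      ≤ {f : V → W | ∀ e ∈ H.edgeSet, Sym2.map f e ∈ G.edgeSet}.ncard := by
  classical
  set F : G.Subgraph → (V → W) := fun G' =>
    if h : Nonempty (G'.coe ≃g H) then (fun v => ((Classical.choice h).symm v : W))
    else fun _ => Classical.arbitrary W with hF
  have hFval : ∀ (G' : G.Subgraph) (h : Nonempty (G'.coe ≃g H)),
      F G' = fun v => ((Classical.choice h).symm v : W) := by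
    intro G' h
    simp only [hF, dif_pos h]
  -- characterization of G' from F G'
  have hverts : ∀ (G' : G.Subgraph) (h : Nonempty (G'.coe ≃g H)),
      G'.verts = Set.range (F G') := by
    intro G' h
    rw [hFval G' h]
    set φ := Classical.choice h
    ext w
    constructor
    · intro hw
      exact ⟨φ ⟨w, hw⟩, by simp⟩
    · rintro ⟨v, rfl⟩
      exact (φ.symm v).2
  have hadj : ∀ (G' : G.Subgraph) (h : Nonempty (G'.coe ≃g H)) (x y : W),
      G'.Adj x y ↔ ∃ a b : V, H.Adj a b ∧ F G' a = x ∧ F G' b = y := by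
    intro G' h x y
    rw [hFval G' h]
    set φ := Classical.choice h
    constructor
    · intro hxy
      have hx : x ∈ G'.verts := G'.edge_vert hxy
      have hy : y ∈ G'.verts := G'.edge_vert hxy.symm
      refine ⟨φ ⟨x, hx⟩, φ ⟨y, hy⟩, ?_, by simp, by simp⟩
      rw [φ.map_adj_iff]
      exact hxy
    · rintro ⟨a, b, hab, rfl, rfl⟩
      have : G'.coe.Adj (φ.symm a) (φ.symm b) := by
        rw [φ.symm.map_adj_iff]
        exact hab
      exact this
  apply Set.ncard_le_ncard_of_injOn F
  · intro G' hG'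
    simp only [Set.mem_setOf_eq] at hG' ⊢
    rw [hFval G' hG']
    set φ := Classical.choice hG'
    intro e he
    induction e using Sym2.ind with
    | _ a b =>
      rw [SimpleGraph.mem_edgeSet] at he
      rw [Sym2.map_pair_eq, SimpleGraph.mem_edgeSet]
      have : G'.coe.Adj (φ.symm a) (φ.symm b) := by
        rw [φ.symm.map_adj_iff]
        exact he
      exact G'.adj_sub this
  · intro G1 h1 G2 h2 hEq
    simp only [Set.mem_setOf_eq] at h1 h2
    apply SimpleGraph.Subgraph.ext
    · rw [hverts G1 h1, hverts G2 h2, hEq]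
    · funext x y
      rw [eq_iff_iff, hadj G1 h1, hadj G2 h2, hEq]


end AGM

/-- The fractional edge-cover number of a graph `H`. -/
noncomputable def fracEdgeCoverNum {V : Type*} [Fintype V] [DecidableEq V]
    (H : SimpleGraph V) : ℝ :=
  sInf {x : ℝ | ∃ ψ : Sym2 V → ℝ, (∀ e, 0 ≤ ψ e ∧ ψ e ≤ 1) ∧
    (∀ e, e ∉ H.edgeSet → ψ e = 0) ∧
    (∀ v : V, 1 ≤ ∑ e : Sym2 V, if v ∈ e then ψ e else 0) ∧
    x = ∑ e : Sym2 V, ψ e}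

/-- AGM bound: the number of subgraphs of `G` isomorphic to `H` is at most
`(2m)^ρ(H)`, where `m` is the number of edges of `G` and `ρ` is the fractional
edge-cover number. -/
theorem stmt_7 {V W : Type*} [Fintype V] [DecidableEq V] [Fintype W]
    (H : SimpleGraph V) (G : SimpleGraph W)
    (hiso : ∀ v : V, ∃ u, H.Adj v u) (m : ℕ) (hm : m = G.edgeSet.ncard) :
    (Set.ncard {G' : G.Subgraph | Nonempty (G'.coe ≃g H)} : ℝ) ≤
      (2 * m : ℝ) ^ (fracEdgeCoverNum H) := by
  classical
  set S := {x : ℝ | ∃ ψ : Sym2 V → ℝ, (∀ e, 0 ≤ ψ e ∧ ψ e ≤ 1) ∧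
    (∀ e, e ∉ H.edgeSet → ψ e = 0) ∧
    (∀ v : V, 1 ≤ ∑ e : Sym2 V, if v ∈ e then ψ e else 0) ∧
    x = ∑ e : Sym2 V, ψ e} with hSdef
  have hρ : fracEdgeCoverNum H = sInf S := rfl
  by_cases hV : IsEmpty V
  · -- V empty : count ≤ 1 and ρ = 0
    haveI : IsEmpty (Sym2 V) := by
      constructor
      intro e
      induction e using Sym2.ind with
      | _ a b => exact hV.elim a
    have hSset : S = {0} := by
      ext x
      simp only [hSdef, Set.mem_setOf_eq, Set.mem_singleton_iff]
      constructor
      · rintro ⟨ψ, -, -, -, hx⟩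
        rw [hx]
        simp
      · intro hx
        refine ⟨fun _ => 0, fun e => by norm_num, fun e _ => rfl, fun v => (hV.elim v), by simp [hx]⟩
    rw [hρ, hSset, csInf_singleton, Real.rpow_zero]
    have hsub : ∀ G1 ∈ {G' : G.Subgraph | Nonempty (G'.coe ≃g H)},
        ∀ G2 ∈ {G' : G.Subgraph | Nonempty (G'.coe ≃g H)}, G1 = G2 := by
      intro G1 h1 G2 h2
      simp only [Set.mem_setOf_eq] at h1 h2
      have hv : ∀ (G' : G.Subgraph), Nonempty (G'.coe ≃g H) → G'.verts = ∅ := by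
        intro G' h
        obtain ⟨φ⟩ := h
        ext w
        simp only [Set.mem_empty_iff_false, iff_false]
        intro hw
        exact hV.elim (φ ⟨w, hw⟩)
      have ha : ∀ (G' : G.Subgraph), Nonempty (G'.coe ≃g H) → ∀ x y, ¬G'.Adj x y := by
        intro G' h x y hxy
        have := G'.edge_vert hxy
        rw [hv G' h] at this
        exact this
      apply SimpleGraph.Subgraph.ext
      · rw [hv G1 h1, hv G2 h2]
      · funext x y
        rw [eq_iff_iff]
        exact ⟨fun h => absurd h (ha G1 h1 x y), fun h => absurd h (ha G2 h2 x y)⟩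
    rcases Set.eq_empty_or_nonempty {G' : G.Subgraph | Nonempty (G'.coe ≃g H)} with he | ⟨G0, hG0⟩
    · rw [he, Set.ncard_empty]
      norm_num
    · have : {G' : G.Subgraph | Nonempty (G'.coe ≃g H)} = {G0} := by
        ext G'
        simp only [Set.mem_singleton_iff]
        exact ⟨fun h => hsub G' h G0 hG0, fun h => h ▸ hG0⟩
      rw [this, Set.ncard_singleton]
      norm_num
  · -- V nonempty
    haveI hVne : Nonempty V := not_isEmpty_iff.mp hV
    have hrpow_nonneg : (0:ℝ) ≤ (2 * m : ℝ) ^ (fracEdgeCoverNum H) :=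
      Real.rpow_nonneg (by positivity) _
    by_cases hW : IsEmpty W
    · have he : {G' : G.Subgraph | Nonempty (G'.coe ≃g H)} = ∅ := by
        ext G'
        simp only [Set.mem_setOf_eq, Set.mem_empty_iff_false, iff_false]
        rintro ⟨φ⟩
        obtain ⟨v⟩ := hVne
        exact hW.elim ((φ.symm v : G'.verts) : W)
      rw [he, Set.ncard_empty]
      exact_mod_cast hrpow_nonneg
    · haveI : Nonempty W := not_isEmpty_iff.mp hW
      by_cases hm0 : m = 0
      · -- no edges in G, but H has edges: count = 0
        have hGe : G.edgeSet = ∅ := by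
          have : G.edgeSet.ncard = 0 := by rw [← hm, hm0]
          rwa [Set.ncard_eq_zero (Set.toFinite _)] at this
        have he : {G' : G.Subgraph | Nonempty (G'.coe ≃g H)} = ∅ := by
          ext G'
          simp only [Set.mem_setOf_eq, Set.mem_empty_iff_false, iff_false]
          rintro ⟨φ⟩
          obtain ⟨v⟩ := hVne
          obtain ⟨u, hu⟩ := hiso v
          have : G'.coe.Adj (φ.symm v) (φ.symm u) := by
            rw [φ.symm.map_adj_iff]
            exact hu
          have hg : G.Adj (φ.symm v : W) (φ.symm u : W) := G'.adj_sub this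
          have : s((φ.symm v : W), (φ.symm u : W)) ∈ G.edgeSet :=
            (SimpleGraph.mem_edgeSet G).mpr hg
          rw [hGe] at this
          exact this
        rw [he, Set.ncard_empty]
        exact_mod_cast hrpow_nonneg
      · -- main case
        have h2m : (1:ℝ) < 2 * m := by
          have : 1 ≤ m := Nat.one_le_iff_ne_zero.mpr hm0
          have : (1:ℝ) ≤ m := by exact_mod_cast this
          linarith
        -- key inequality for every feasible x
        have key : ∀ x ∈ S, (Set.ncard {G' : G.Subgraph | Nonempty (G'.coe ≃g H)} : ℝ)
            ≤ (2 * m : ℝ) ^ x := by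
          rintro x ⟨ψ, hψ1, hψ2, hψ3, rfl⟩
          calc (Set.ncard {G' : G.Subgraph | Nonempty (G'.coe ≃g H)} : ℝ)
              ≤ (Set.ncard {f : V → W | ∀ e ∈ H.edgeSet, Sym2.map f e ∈ G.edgeSet} : ℝ) := by
                exact_mod_cast subgraph_count_le H G
            _ ≤ (2 * m : ℝ) ^ (∑ e : Sym2 V, ψ e) :=
                hom_count_le H G ψ (fun e => (hψ1 e).1) hψ2 hψ3 m hm
        -- S is nonempty
        have hSne : S.Nonempty := by
          refine ⟨∑ e : Sym2 V, (if e ∈ H.edgeSet then (1:ℝ) else 0),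
            fun e => if e ∈ H.edgeSet then (1:ℝ) else 0, ?_, ?_, ?_, rfl⟩
          · intro e
            by_cases h : e ∈ H.edgeSet <;> simp [h]
          · intro e he
            simp only [if_neg he]
          · intro v
            obtain ⟨u, hu⟩ := hiso v
            have he0 : s(v, u) ∈ H.edgeSet := (SimpleGraph.mem_edgeSet H).mpr hu
            have hv0 : v ∈ s(v, u) := Sym2.mem_mk_left v u
            calc (1:ℝ) = (if v ∈ s(v,u) then (if s(v,u) ∈ H.edgeSet then (1:ℝ) else 0) else 0) := by
                  rw [if_pos hv0, if_pos he0]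
              _ ≤ ∑ e : Sym2 V, (if v ∈ e then (if e ∈ H.edgeSet then (1:ℝ) else 0) else 0) := by
                  apply Finset.single_le_sum (f := fun e : Sym2 V =>
                    if v ∈ e then (if e ∈ H.edgeSet then (1:ℝ) else 0) else 0) _
                    (Finset.mem_univ s(v,u))
                  intro e _
                  split
                  · split <;> norm_num
                  · norm_num
        set c := (Set.ncard {G' : G.Subgraph | Nonempty (G'.coe ≃g H)} : ℝ) with hc
        by_cases hc0 : Set.ncard {G' : G.Subgraph | Nonempty (G'.coe ≃g H)} = 0
        · rw [hc, hc0]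
          exact_mod_cast hrpow_nonneg
        · have hc1 : (1:ℝ) ≤ c := by
            rw [hc]
            exact_mod_cast Nat.one_le_iff_ne_zero.mpr hc0
          have hcpos : (0:ℝ) < c := lt_of_lt_of_le one_pos hc1
          have hlogpos : 0 < Real.log (2 * m) := Real.log_pos h2m
          have hlb : ∀ x ∈ S, Real.log c / Real.log (2 * m) ≤ x := by
            intro x hx
            rw [div_le_iff₀ hlogpos]
            calc Real.log c ≤ Real.log ((2 * m : ℝ) ^ x) :=
                  Real.log_le_log hcpos (key x hx)
              _ = x * Real.log (2 * m) := Real.log_rpow (by linarith) x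
          have hInf : Real.log c / Real.log (2 * m) ≤ sInf S := le_csInf hSne hlb
          calc c = (2 * m : ℝ) ^ (Real.log c / Real.log (2 * m)) := by
                rw [Real.rpow_def_of_pos (by linarith), mul_comm,
                  div_mul_cancel₀ (Real.log c) (ne_of_gt hlogpos), Real.exp_log hcpos]
            _ ≤ (2 * m : ℝ) ^ (fracEdgeCoverNum H) := by
                rw [hρ]
                exact Real.rpow_le_rpow_of_exponent_le (le_of_lt h2m) hInf
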